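/- A free product of two locally indicable groups is locally indicable. -/

import Mathlib

set_option linter.unusedSectionVars false
set_option maxHeartbeats 1000000

/-- A group is locally indicable if every nontrivial finitely generated subgroup
admits a surjective homomorphism onto the infinite cyclic group. -/
def LocallyIndicable (G : Type*) [Group G] : Prop :=
  ∀ S : Subgroup G, S ≠ ⊥ → S.FG →
    ∃ f : S →* Multiplicative ℤ, Function.Surjective f

universe u v

namespace HigmanAux

open Monoid Function Monoid.CoprodI Monoid.Coprod



section Words

variable {ι : Type*} [DecidableEq ι] {M : ι → Type*} [∀ i, Group (M i)]
  [∀ i, DecidableEq (M i)]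

theorem smul_toList_of_fstIdx_ne {i : ι} {m : M i} (hm : m ≠ 1) (w : Word M)
    (hw : w.fstIdx ≠ some i) :
    (of m • w).toList = ⟨i, m⟩ :: w.toList := by
  rw [← Word.cons_eq_smul (h1 := hw) (h2 := hm)]
  simp [Word.cons]

theorem smul_cons_of_ne_one {i : ι} {m m' : M i} (w : Word M) (h1 : w.fstIdx ≠ some i)
    (h2 : m' ≠ 1) (hmm : m * m' ≠ 1) :
    (of m • Word.cons m' w h1 h2).toList = ⟨i, m * m'⟩ :: w.toList := by
  rw [Word.cons_eq_smul, ← mul_smul, ← MonoidHom.map_mul]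
  exact smul_toList_of_fstIdx_ne hmm w h1

theorem smul_cons_of_eq_one {i : ι} {m m' : M i} (w : Word M) (h1 : w.fstIdx ≠ some i)
    (h2 : m' ≠ 1) (hmm : m * m' = 1) :
    of m • Word.cons m' w h1 h2 = w := by
  rw [Word.cons_eq_smul, ← mul_smul, ← MonoidHom.map_mul, hmm, MonoidHom.map_one, one_smul]

theorem fstIdx_eq_of_toList {i : ι} {w : Word M} {m : M i} {t}
    (h : w.toList = ⟨i, m⟩ :: t) : w.fstIdx = some i := by
  simp [Word.fstIdx, h]

end Words

section Bool

variable (G : Type u) (H : Type v) [Group G] [Group H]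

/-- The two factors as a `Bool`-indexed family. -/
def Fac : Bool → Type (max u v) := fun b => cond b (ULift.{v} G) (ULift.{u} H)

instance : ∀ b, Group (Fac G H b) := fun b =>
  match b with
  | true => inferInstanceAs (Group (ULift G))
  | false => inferInstanceAs (Group (ULift H))

noncomputable instance : ∀ b, DecidableEq (Fac G H b) := fun _ => Classical.decEq _

/-- The index type for the free basis of the cartesian subgroup. -/
def BT : Type (max u v) := {p : G × H // p.1 ≠ 1 ∧ p.2 ≠ 1}

variable {G H}

/-- first letter of a pair -/
def lG (p : BT G H) : Fac G H true := ULift.up p.1.1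

/-- second letter of a pair -/
def lH (p : BT G H) : Fac G H false := ULift.up p.1.2

theorem lG_ne_one (p : BT G H) : lG p ≠ 1 := fun h => p.2.1 (congrArg ULift.down h)

theorem lH_ne_one (p : BT G H) : lH p ≠ 1 := fun h => p.2.2 (congrArg ULift.down h)

/-- The commutator elements in the free product `CoprodI (Fac G H)`. -/
noncomputable def aElt (p : BT G H) : CoprodI (Fac G H) :=
  of (lG p) * of (lH p) * (of (lG p))⁻¹ * (of (lH p))⁻¹

/-- Ping-pong set `X`: words starting with the letters `g, h`. -/
def XS (p : BT G H) : Set (Word (Fac G H)) :=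
  {w | ∃ t, w.toList = ⟨true, lG p⟩ :: ⟨false, lH p⟩ :: t}

/-- Ping-pong set `Y`: words starting with the letters `h, g`. -/
def YS (p : BT G H) : Set (Word (Fac G H)) :=
  {w | ∃ t, w.toList = ⟨false, lH p⟩ :: ⟨true, lG p⟩ :: t}

/-- Prepending the three letters `g, h, g⁻¹` to a word not starting with a `G`-letter. -/
theorem step3 (p : BT G H) (v : Word (Fac G H)) (hv : v.fstIdx ≠ some true) :
    (of (lG p) • of (lH p) • of (lG p)⁻¹ • v).toList =
      ⟨true, lG p⟩ :: ⟨false, lH p⟩ :: ⟨true, (lG p)⁻¹⟩ :: v.toList := by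
  have h1 : (of (lG p)⁻¹ • v).toList = ⟨true, (lG p)⁻¹⟩ :: v.toList :=
    smul_toList_of_fstIdx_ne (inv_ne_one.2 (lG_ne_one p)) v hv
  have h2 : (of (lH p) • of (lG p)⁻¹ • v).toList =
      ⟨false, lH p⟩ :: ⟨true, (lG p)⁻¹⟩ :: v.toList := by
    rw [smul_toList_of_fstIdx_ne (lH_ne_one p) _ (by rw [fstIdx_eq_of_toList h1]; simp), h1]
  rw [smul_toList_of_fstIdx_ne (lG_ne_one p) _ (by rw [fstIdx_eq_of_toList h2]; simp), h2]

/-- Prepending the three letters `h, g, h⁻¹` to a word not starting with an `H`-letter. -/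
theorem step3' (p : BT G H) (v : Word (Fac G H)) (hv : v.fstIdx ≠ some false) :
    (of (lH p) • of (lG p) • of (lH p)⁻¹ • v).toList =
      ⟨false, lH p⟩ :: ⟨true, lG p⟩ :: ⟨false, (lH p)⁻¹⟩ :: v.toList := by
  have h1 : (of (lH p)⁻¹ • v).toList = ⟨false, (lH p)⁻¹⟩ :: v.toList :=
    smul_toList_of_fstIdx_ne (inv_ne_one.2 (lH_ne_one p)) v hv
  have h2 : (of (lG p) • of (lH p)⁻¹ • v).toList =
      ⟨true, lG p⟩ :: ⟨false, (lH p)⁻¹⟩ :: v.toList := by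
    rw [smul_toList_of_fstIdx_ne (lG_ne_one p) _ (by rw [fstIdx_eq_of_toList h1]; simp), h1]
  rw [smul_toList_of_fstIdx_ne (lH_ne_one p) _ (by rw [fstIdx_eq_of_toList h2]; simp), h2]

theorem aElt_smul_mem (p : BT G H) (w : Word (Fac G H)) (hw : w ∉ YS p) :
    aElt p • w ∈ XS p := by
  have key : aElt p • w = of (lG p) • of (lH p) • of (lG p)⁻¹ • of (lH p)⁻¹ • w := by
    rw [aElt, ← map_inv, ← map_inv, mul_smul, mul_smul, mul_smul, map_inv, map_inv]
  rw [key]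
  induction w using Word.consRecOn with
  | empty =>
    have h0 : (of (lH p)⁻¹ • Word.empty).toList =
        [(⟨false, (lH p)⁻¹⟩ : Σ b, Fac G H b)] :=
      smul_toList_of_fstIdx_ne (inv_ne_one.2 (lH_ne_one p)) _ (by simp [Word.fstIdx, Word.empty])
    exact ⟨_, by rw [step3 p _ (by rw [fstIdx_eq_of_toList h0]; simp), h0]⟩
  | cons i m w' h1 h2 _ =>
    cases i with
    | true =>
      -- starts with a G-letter: no cancellation
      have h0 : (of (lH p)⁻¹ • Word.cons m w' h1 h2).toList =
          ⟨false, (lH p)⁻¹⟩ :: (Word.cons m w' h1 h2).toList :=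
        smul_toList_of_fstIdx_ne (inv_ne_one.2 (lH_ne_one p)) _ (by simp [Word.fstIdx, Word.cons])
      exact ⟨_, by rw [step3 p _ (by rw [fstIdx_eq_of_toList h0]; simp), h0]⟩
    | false =>
      by_cases hm : (lH p)⁻¹ * m = 1
      · -- first letter is h; it cancels
        rw [smul_cons_of_eq_one w' h1 h2 hm]
        have hmh : m = lH p := by rw [inv_mul_eq_one] at hm; exact hm.symm
        induction w' using Word.consRecOn with
        | empty =>
          have h0 : (of (lG p)⁻¹ • Word.empty).toList =
              [(⟨true, (lG p)⁻¹⟩ : Σ b, Fac G H b)] :=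
            smul_toList_of_fstIdx_ne (inv_ne_one.2 (lG_ne_one p)) _
              (by simp [Word.fstIdx, Word.empty])
          have h2' : (of (lH p) • of (lG p)⁻¹ • Word.empty).toList =
              ⟨false, lH p⟩ :: [(⟨true, (lG p)⁻¹⟩ : Σ b, Fac G H b)] := by
            rw [smul_toList_of_fstIdx_ne (lH_ne_one p) _
              (by rw [fstIdx_eq_of_toList h0]; simp), h0]
          exact ⟨_, by
            rw [smul_toList_of_fstIdx_ne (lG_ne_one p) _
              (by rw [fstIdx_eq_of_toList h2']; simp), h2']⟩
        | cons i' m' w'' h1' h2' _ =>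
          cases i' with
          | false => exact absurd (by simp [Word.fstIdx, Word.cons]) h1
          | true =>
            -- second letter is a G-letter m'; since w ∉ Y, m' ≠ g
            have hm' : (lG p)⁻¹ * m' ≠ 1 := by
              rw [Ne, inv_mul_eq_one]
              rintro rfl
              exact hw ⟨w''.toList, by simp [Word.cons, hmh]⟩
            have h0 : (of (lG p)⁻¹ • Word.cons m' w'' h1' h2').toList =
                ⟨true, (lG p)⁻¹ * m'⟩ :: w''.toList :=
              smul_cons_of_ne_one w'' h1' h2' hm'
            have h2'' : (of (lH p) • of (lG p)⁻¹ • Word.cons m' w'' h1' h2').toList =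
                ⟨false, lH p⟩ :: ⟨true, (lG p)⁻¹ * m'⟩ :: w''.toList := by
              rw [smul_toList_of_fstIdx_ne (lH_ne_one p) _
                (by rw [fstIdx_eq_of_toList h0]; simp), h0]
            exact ⟨_, by
              rw [smul_toList_of_fstIdx_ne (lG_ne_one p) _
                (by rw [fstIdx_eq_of_toList h2'']; simp), h2'']⟩
      · -- first letter is an H-letter ≠ h: merge
        have h0 : (of (lH p)⁻¹ • Word.cons m w' h1 h2).toList =
            ⟨false, (lH p)⁻¹ * m⟩ :: w'.toList :=
          smul_cons_of_ne_one w' h1 h2 hm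
        exact ⟨_, by rw [step3 p _ (by rw [fstIdx_eq_of_toList h0]; simp), h0]⟩

theorem aElt_inv_smul_mem (p : BT G H) (w : Word (Fac G H)) (hw : w ∉ XS p) :
    (aElt p)⁻¹ • w ∈ YS p := by
  have key : (aElt p)⁻¹ • w = of (lH p) • of (lG p) • of (lH p)⁻¹ • of (lG p)⁻¹ • w := by
    rw [aElt]
    simp only [mul_inv_rev, inv_inv, mul_smul, map_inv]
  rw [key]
  induction w using Word.consRecOn with
  | empty =>
    have h0 : (of (lG p)⁻¹ • Word.empty).toList =
        [(⟨true, (lG p)⁻¹⟩ : Σ b, Fac G H b)] :=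
      smul_toList_of_fstIdx_ne (inv_ne_one.2 (lG_ne_one p)) _ (by simp [Word.fstIdx, Word.empty])
    exact ⟨_, by rw [step3' p _ (by rw [fstIdx_eq_of_toList h0]; simp), h0]⟩
  | cons i m w' h1 h2 _ =>
    cases i with
    | false =>
      have h0 : (of (lG p)⁻¹ • Word.cons m w' h1 h2).toList =
          ⟨true, (lG p)⁻¹⟩ :: (Word.cons m w' h1 h2).toList :=
        smul_toList_of_fstIdx_ne (inv_ne_one.2 (lG_ne_one p)) _ (by simp [Word.fstIdx, Word.cons])
      exact ⟨_, by rw [step3' p _ (by rw [fstIdx_eq_of_toList h0]; simp), h0]⟩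
    | true =>
      by_cases hm : (lG p)⁻¹ * m = 1
      · rw [smul_cons_of_eq_one w' h1 h2 hm]
        have hmh : m = lG p := by rw [inv_mul_eq_one] at hm; exact hm.symm
        induction w' using Word.consRecOn with
        | empty =>
          have h0 : (of (lH p)⁻¹ • Word.empty).toList =
              [(⟨false, (lH p)⁻¹⟩ : Σ b, Fac G H b)] :=
            smul_toList_of_fstIdx_ne (inv_ne_one.2 (lH_ne_one p)) _
              (by simp [Word.fstIdx, Word.empty])
          have h2' : (of (lG p) • of (lH p)⁻¹ • Word.empty).toList =
              ⟨true, lG p⟩ :: [(⟨false, (lH p)⁻¹⟩ : Σ b, Fac G H b)] := by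
            rw [smul_toList_of_fstIdx_ne (lG_ne_one p) _
              (by rw [fstIdx_eq_of_toList h0]; simp), h0]
          exact ⟨_, by
            rw [smul_toList_of_fstIdx_ne (lH_ne_one p) _
              (by rw [fstIdx_eq_of_toList h2']; simp), h2']⟩
        | cons i' m' w'' h1' h2' _ =>
          cases i' with
          | true => exact absurd (by simp [Word.fstIdx, Word.cons]) h1
          | false =>
            have hm' : (lH p)⁻¹ * m' ≠ 1 := by
              rw [Ne, inv_mul_eq_one]
              rintro rfl
              exact hw ⟨w''.toList, by simp [Word.cons, hmh]⟩
            have h0 : (of (lH p)⁻¹ • Word.cons m' w'' h1' h2').toList =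
                ⟨false, (lH p)⁻¹ * m'⟩ :: w''.toList :=
              smul_cons_of_ne_one w'' h1' h2' hm'
            have h2'' : (of (lG p) • of (lH p)⁻¹ • Word.cons m' w'' h1' h2').toList =
                ⟨true, lG p⟩ :: ⟨false, (lH p)⁻¹ * m'⟩ :: w''.toList := by
              rw [smul_toList_of_fstIdx_ne (lG_ne_one p) _
                (by rw [fstIdx_eq_of_toList h0]; simp), h0]
            exact ⟨_, by
              rw [smul_toList_of_fstIdx_ne (lH_ne_one p) _
                (by rw [fstIdx_eq_of_toList h2'']; simp), h2'']⟩
      · have h0 : (of (lG p)⁻¹ • Word.cons m w' h1 h2).toList =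
            ⟨true, (lG p)⁻¹ * m⟩ :: w'.toList :=
          smul_cons_of_ne_one w' h1 h2 hm
        exact ⟨_, by rw [step3' p _ (by rw [fstIdx_eq_of_toList h0]; simp), h0]⟩

theorem injective_lift_aElt [Nontrivial (BT G H)] :
    Function.Injective (FreeGroup.lift (aElt (G := G) (H := H))) := by
  apply FreeGroup.injective_lift_of_ping_pong aElt XS YS
  · intro p
    refine ⟨Word.cons (lG p) (Word.cons (lH p) Word.empty ?_ (lH_ne_one p)) ?_ (lG_ne_one p),
      ?_⟩
    · simp [Word.fstIdx, Word.empty]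
    · simp [Word.fstIdx, Word.cons]
    · exact ⟨[], by simp [Word.cons]⟩
  · intro p q hpq
    rw [Function.onFun_apply, Set.disjoint_left]
    rintro w ⟨t, ht⟩ ⟨t', ht'⟩
    rw [ht] at ht'
    apply hpq
    rcases List.cons_eq_cons.mp ht' with ⟨ha, hrest⟩
    rcases List.cons_eq_cons.mp hrest with ⟨hb, -⟩
    have ha' : lG p = lG q := eq_of_heq (Sigma.ext_iff.mp ha).2
    have hb' : lH p = lH q := eq_of_heq (Sigma.ext_iff.mp hb).2
    have h1 : p.1.1 = q.1.1 := congrArg ULift.down ha'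
    have h2 : p.1.2 = q.1.2 := congrArg ULift.down hb'
    exact Subtype.ext (Prod.ext h1 h2)
  · intro p q hpq
    rw [Function.onFun_apply, Set.disjoint_left]
    rintro w ⟨t, ht⟩ ⟨t', ht'⟩
    rw [ht] at ht'
    apply hpq
    rcases List.cons_eq_cons.mp ht' with ⟨ha, hrest⟩
    rcases List.cons_eq_cons.mp hrest with ⟨hb, -⟩
    have ha' : lH p = lH q := eq_of_heq (Sigma.ext_iff.mp ha).2
    have hb' : lG p = lG q := eq_of_heq (Sigma.ext_iff.mp hb).2
    have h1 : p.1.1 = q.1.1 := congrArg ULift.down hb'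
    have h2 : p.1.2 = q.1.2 := congrArg ULift.down ha'
    exact Subtype.ext (Prod.ext h1 h2)
  · intro p q
    rw [Set.disjoint_left]
    rintro w ⟨t, ht⟩ ⟨t', ht'⟩
    rw [ht] at ht'
    exact absurd (Sigma.ext_iff.mp (List.cons_eq_cons.mp ht').1).1 (by simp)
  · intro p
    rintro x ⟨w, hw, rfl⟩
    exact aElt_smul_mem p w hw
  · intro p
    rintro x ⟨w, hw, rfl⟩
    simpa using aElt_inv_smul_mem p w hw

end Bool




section Free

/-- A nontrivial free group surjects onto `ℤ`. -/
theorem freeGroup_surj_int (K : Type*) [Group K] [IsFreeGroup K] [Nontrivial K] :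
    ∃ f : K →* Multiplicative ℤ, Function.Surjective f := by
  classical
  have hne : Nonempty (IsFreeGroup.Generators K) := by
    by_contra hemp
    haveI : IsEmpty (IsFreeGroup.Generators K) := not_nonempty_iff.mp hemp
    have h1 : ∀ x : FreeGroup (IsFreeGroup.Generators K), x = 1 := by
      intro x
      induction x using FreeGroup.induction_on with
      | C1 => rfl
      | of x => exact isEmptyElim x
      | inv_of x _ => exact isEmptyElim x
      | mul x y hx hy => rw [hx, hy, one_mul]
    rcases exists_pair_ne K with ⟨a, b, hab⟩
    apply hab
    apply (IsFreeGroup.toFreeGroup (G := K)).injective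
    rw [h1 (IsFreeGroup.toFreeGroup (G := K) a), h1 (IsFreeGroup.toFreeGroup (G := K) b)]
  obtain ⟨i₀⟩ := hne
  let f₀ : FreeGroup (IsFreeGroup.Generators K) →* Multiplicative ℤ :=
    FreeGroup.lift fun i => if i = i₀ then Multiplicative.ofAdd 1 else 1
  refine ⟨f₀.comp (IsFreeGroup.toFreeGroup (G := K)).toMonoidHom, ?_⟩
  intro z
  refine ⟨(IsFreeGroup.toFreeGroup (G := K)).symm ((FreeGroup.of i₀) ^ (Multiplicative.toAdd z)), ?_⟩
  simp only [MonoidHom.comp_apply, MulEquiv.coe_toMonoidHom, MulEquiv.apply_symm_apply, map_zpow,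
    f₀, FreeGroup.lift_apply_of, if_pos rfl, if_true, eq_self_iff_true]
  rw [← ofAdd_zsmul]
  simp

end Free

section Coprod

variable {G H : Type*} [Group G] [Group H]

/-- The commutator `[inl g, inr h]` for an arbitrary pair. -/
def cAll (q : G × H) : Coprod G H :=
  inl q.1 * inr q.2 * (inl q.1)⁻¹ * (inr q.2)⁻¹

/-- The cartesian subgroup: closure of the commutators. -/
def CC (G H : Type*) [Group G] [Group H] : Subgroup (Coprod G H) :=
  Subgroup.closure (Set.range (cAll (G := G) (H := H)))

theorem conj_inl_cAll (a : G) (q : G × H) :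
    inl a * cAll q * (inl a)⁻¹ = cAll (a * q.1, q.2) * (cAll (a, q.2))⁻¹ := by
  simp only [cAll, map_mul]
  group

theorem conj_inr_cAll (b : H) (q : G × H) :
    inr b * cAll q * (inr b)⁻¹ = (cAll (q.1, b))⁻¹ * cAll (q.1, b * q.2) := by
  simp only [cAll, map_mul]
  group

theorem conj_inl_mem (a : G) {x : Coprod G H} (hx : x ∈ CC G H) :
    inl a * x * (inl a)⁻¹ ∈ CC G H := by
  induction hx using Subgroup.closure_induction with
  | mem y hy =>
    rcases hy with ⟨q, rfl⟩
    rw [conj_inl_cAll]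
    exact mul_mem (Subgroup.subset_closure ⟨_, rfl⟩)
      (inv_mem (Subgroup.subset_closure ⟨_, rfl⟩))
  | one => simpa using one_mem _
  | mul y z hy hz ihy ihz =>
    have h : inl a * (y * z) * (inl a)⁻¹ = (inl a * y * (inl a)⁻¹) * (inl a * z * (inl a)⁻¹) := by
      group
    rw [h]; exact mul_mem ihy ihz
  | inv y hy ihy =>
    have h : inl a * y⁻¹ * (inl a)⁻¹ = (inl a * y * (inl a)⁻¹)⁻¹ := by group
    rw [h]; exact inv_mem ihy

theorem conj_inr_mem (b : H) {x : Coprod G H} (hx : x ∈ CC G H) :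
    inr b * x * (inr b)⁻¹ ∈ CC G H := by
  induction hx using Subgroup.closure_induction with
  | mem y hy =>
    rcases hy with ⟨q, rfl⟩
    rw [conj_inr_cAll]
    exact mul_mem (inv_mem (Subgroup.subset_closure ⟨_, rfl⟩))
      (Subgroup.subset_closure ⟨_, rfl⟩)
  | one => simpa using one_mem _
  | mul y z hy hz ihy ihz =>
    have h : inr b * (y * z) * (inr b)⁻¹ = (inr b * y * (inr b)⁻¹) * (inr b * z * (inr b)⁻¹) := by
      group
    rw [h]; exact mul_mem ihy ihz
  | inv y hy ihy =>
    have h : inr b * y⁻¹ * (inr b)⁻¹ = (inr b * y * (inr b)⁻¹)⁻¹ := by group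
    rw [h]; exact inv_mem ihy

/-- decomposition step for `inl` -/
theorem step_inl (g : G) (z : Coprod G H)
    (hz : ∃ c ∈ CC G H, z = c * inl (fst z) * inr (snd z)) :
    ∃ c ∈ CC G H, inl g * z = c * inl (fst (inl g * z)) * inr (snd (inl g * z)) := by
  rcases hz with ⟨c, hc, hzd⟩
  refine ⟨inl g * c * (inl g)⁻¹, conj_inl_mem g hc, ?_⟩
  have e1 : fst (inl g * z) = g * fst z := by simp
  have e2 : snd (inl g * z) = snd z := by simp
  rw [e1, e2]
  calc inl g * z = inl g * (c * inl (fst z) * inr (snd z)) := by rw [← hzd]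
    _ = inl g * c * (inl g)⁻¹ * inl (g * fst z) * inr (snd z) := by
        rw [map_mul inl g (fst z)]; group

/-- decomposition step for `inr` -/
theorem step_inr (h : H) (z : Coprod G H)
    (hz : ∃ c ∈ CC G H, z = c * inl (fst z) * inr (snd z)) :
    ∃ c ∈ CC G H, inr h * z = c * inl (fst (inr h * z)) * inr (snd (inr h * z)) := by
  rcases hz with ⟨c, hc, hzd⟩
  refine ⟨(inr h * c * (inr h)⁻¹) * (cAll (fst z, h))⁻¹, mul_mem (conj_inr_mem h hc)
    (inv_mem (Subgroup.subset_closure ⟨_, rfl⟩)), ?_⟩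
  have e1 : fst (inr h * z) = fst z := by simp
  have e2 : snd (inr h * z) = h * snd z := by simp
  rw [e1, e2]
  calc inr h * z = inr h * (c * inl (fst z) * inr (snd z)) := by rw [← hzd]
    _ = inr h * c * (inr h)⁻¹ * (cAll (fst z, h))⁻¹ * inl (fst z) * inr (h * snd z) := by
        simp only [cAll, map_mul]; group

theorem exists_decomp (x : Coprod G H) :
    ∃ c ∈ CC G H, x = c * inl (fst x) * inr (snd x) := by
  have hx : x ∈ Subgroup.closure (Set.range (inl : G →* Coprod G H) ∪
      Set.range (inr : H →* Coprod G H)) := by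
    rw [Coprod.closure_range_inl_union_inr]
    trivial
  induction hx using Subgroup.closure_induction_left with
  | one => exact ⟨1, one_mem _, by simp⟩
  | mul_left y hy z hz ih =>
    rcases hy with ⟨g, rfl⟩ | ⟨h, rfl⟩
    · exact step_inl g z ih
    · exact step_inr h z ih
  | inv_mul_cancel y hy z hz ih =>
    rcases hy with ⟨g, rfl⟩ | ⟨h, rfl⟩
    · rw [← map_inv]; exact step_inl g⁻¹ z ih
    · rw [← map_inv]; exact step_inr h⁻¹ z ih

theorem CC_eq_ker : CC G H = MonoidHom.ker (toProd : Coprod G H →* G × H) := by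
  apply le_antisymm
  · rw [CC, Subgroup.closure_le]
    rintro _ ⟨q, rfl⟩
    simp [cAll, MonoidHom.mem_ker, Prod.ext_iff]
  · intro x hx
    rcases exists_decomp x with ⟨c, hc, hd⟩
    rw [MonoidHom.mem_ker] at hx
    have h1 : fst x = 1 := by rw [← fst_toProd, hx]; rfl
    have h2 : snd x = 1 := by rw [← snd_toProd, hx]; rfl
    rw [hd, h1, h2]
    simpa using hc

end Coprod


section Bridge

variable {G : Type u} {H : Type v} [Group G] [Group H]

/-- The commutators indexed by the basis type. -/
def cElt (p : BT G H) : Coprod G H := cAll p.1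

/-- The comparison map to the indexed free product. -/
def eHom : Coprod G H →* CoprodI (Fac G H) :=
  Coprod.lift
    ((CoprodI.of (i := true)).comp (MulEquiv.ulift (α := G)).symm.toMonoidHom)
    ((CoprodI.of (i := false)).comp (MulEquiv.ulift (α := H)).symm.toMonoidHom)

theorem eHom_cElt (p : BT G H) : eHom (cElt p) = aElt p := by
  simp only [cElt, cAll, aElt, eHom, map_mul, map_inv, lG, lH,
    Coprod.lift_apply_inl, Coprod.lift_apply_inr, MonoidHom.comp_apply]
  rfl

theorem injective_lift_cElt [Nontrivial (BT G H)] :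
    Function.Injective (FreeGroup.lift (cElt (G := G) (H := H))) := by
  have hcomp : eHom.comp (FreeGroup.lift (cElt (G := G) (H := H))) = FreeGroup.lift aElt :=
    FreeGroup.ext_hom _ _ fun p => by
      simp [MonoidHom.comp_apply, FreeGroup.lift_apply_of, eHom_cElt]
  have h2 : Function.Injective
      (eHom.comp (FreeGroup.lift (cElt (G := G) (H := H)))) := by
    rw [hcomp]; exact injective_lift_aElt
  exact fun x y hxy => h2 (by simp [MonoidHom.comp_apply, hxy])

theorem range_lift_cElt :
    (FreeGroup.lift (cElt (G := G) (H := H))).range = CC G H := by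
  rw [FreeGroup.range_lift_eq_closure]
  apply le_antisymm
  · rw [Subgroup.closure_le]
    rintro _ ⟨p, rfl⟩
    exact Subgroup.subset_closure ⟨p.1, rfl⟩
  · rw [CC, Subgroup.closure_le]
    rintro _ ⟨q, rfl⟩
    by_cases h1 : q.1 = 1
    · have h : cAll q = 1 := by simp [cAll, h1]
      rw [SetLike.mem_coe, h]; exact one_mem _
    by_cases h2 : q.2 = 1
    · have h : cAll q = 1 := by simp [cAll, h2]
      rw [SetLike.mem_coe, h]; exact one_mem _
    · exact Subgroup.subset_closure ⟨⟨q, h1, h2⟩, rfl⟩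

theorem CC_eq_bot (hemp : ¬Nonempty (BT G H)) : CC G H = ⊥ := by
  rw [CC, eq_bot_iff, Subgroup.closure_le]
  rintro _ ⟨q, rfl⟩
  have hq : q.1 = 1 ∨ q.2 = 1 := by
    by_contra hq
    push_neg at hq
    exact hemp ⟨⟨q, hq.1, hq.2⟩⟩
  have h1 : cAll q = 1 := by rcases hq with h | h <;> simp [cAll, h]
  simp [h1]

theorem not_square_one {G : Type*} [Group G] (hLI : LocallyIndicable G)
    (g₀ : G) (hg : g₀ ≠ 1) (hsq : g₀ * g₀ = 1) : False := by
  obtain ⟨f, hf⟩ := hLI (Subgroup.zpowers g₀)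
    (fun h => hg (Subgroup.mem_bot.mp (h ▸ Subgroup.mem_zpowers g₀)))
    ⟨{g₀}, by rw [Finset.coe_singleton, ← Subgroup.zpowers_eq_closure]⟩
  obtain ⟨x, hx⟩ := hf (Multiplicative.ofAdd 1)
  have hx2 : x * x = 1 := by
    apply Subtype.ext
    obtain ⟨n, hn⟩ := Subgroup.mem_zpowers_iff.mp x.2
    simp only [Subgroup.coe_mul, OneMemClass.coe_one]
    rw [← hn, ← zpow_add]
    have h2n : n + n = 2 * n := by ring
    have h2 : g₀ ^ (2 : ℤ) = 1 := by
      rw [show (2 : ℤ) = ((2 : ℕ) : ℤ) by norm_cast, zpow_natCast, pow_two, hsq]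
    rw [h2n, zpow_mul, h2, one_zpow]
  have hcon : Multiplicative.ofAdd (1 : ℤ) * Multiplicative.ofAdd 1 = 1 := by
    rw [← hx, ← map_mul, hx2, map_one]
  simp only [← ofAdd_add, ofAdd_eq_one] at hcon
  omega

theorem BT_square (hnt : ¬Nontrivial (BT G H)) (p : BT G H) : p.1.1 * p.1.1 = 1 := by
  by_contra hsq
  refine hnt ⟨⟨⟨(p.1.1 * p.1.1, p.1.2), hsq, p.2.2⟩, p, fun hEq => ?_⟩⟩
  have h := congrArg (fun x : BT G H => x.1.1) hEq
  simp only at h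
  exact p.2.1 (mul_eq_right.mp h)

theorem fg_map {G K : Type*} [Group G] [Group K] {S : Subgroup G} (h : S.FG) (f : G →* K) :
    (S.map f).FG := by
  classical
  rcases h with ⟨Fs, hFs⟩
  exact ⟨Fs.image f, by rw [Finset.coe_image, ← MonoidHom.map_closure, hFs]⟩

end Bridge

end HigmanAux

open HigmanAux Monoid Monoid.Coprod in
/-- A free product of two locally indicable groups is locally indicable. -/
theorem coprod_locallyIndicable {G H : Type*} [Group G] [Group H]
    (hG : LocallyIndicable G) (hH : LocallyIndicable H) :
    LocallyIndicable (Monoid.Coprod G H) := by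
  classical
  intro S hS hFG
  by_cases h1 : Subgroup.map (fst : Coprod G H →* G) S = ⊥
  · by_cases h2 : Subgroup.map (snd : Coprod G H →* H) S = ⊥
    · -- both projections trivial: S lies in the cartesian subgroup
      have hSle : S ≤ CC G H := by
        rw [CC_eq_ker]
        intro x hx
        have hf : fst x = 1 := by
          have h := Subgroup.mem_map_of_mem (fst : Coprod G H →* G) hx
          rw [h1] at h
          exact Subgroup.mem_bot.mp h
        have hs : snd x = 1 := by
          have h := Subgroup.mem_map_of_mem (snd : Coprod G H →* H) hx
          rw [h2] at h
          exact Subgroup.mem_bot.mp h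
        have hker : toProd x = 1 := by
          rw [← Coprod.prod_mk_fst_snd, hf, hs]
          rfl
        exact hker
      by_cases hBT : Nonempty (BT G H)
      · by_cases hBT2 : Nontrivial (BT G H)
        · haveI := hBT2
          set φ := FreeGroup.lift (cElt (G := G) (H := H)) with hφ
          have hrange : φ.range = CC G H := range_lift_cElt
          set T : Subgroup (FreeGroup (BT G H)) := S.comap φ with hT
          let θ : T →* S := MonoidHom.codRestrict (φ.comp T.subtype) S (fun x => x.2)
          have hθinj : Function.Injective θ := by
            intro x y hxy
            have h : φ x.1 = φ y.1 := congrArg Subtype.val hxy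
            exact Subtype.ext (injective_lift_cElt h)
          have hθsurj : Function.Surjective θ := by
            intro s
            have hs' : (s : Coprod G H) ∈ φ.range := by
              rw [hrange]; exact hSle s.2
            rcases hs' with ⟨x, hx⟩
            refine ⟨⟨x, ?_⟩, Subtype.ext hx⟩
            show φ x ∈ S
            rw [hx]; exact s.2
          haveI : Nontrivial S := (Subgroup.nontrivial_iff_ne_bot S).mpr hS
          haveI : Nontrivial T := by
            by_contra hTn
            haveI := not_nontrivial_iff_subsingleton.mp hTn
            haveI := hθsurj.subsingleton
            exact not_subsingleton_iff_nontrivial.mpr ‹Nontrivial S› ‹Subsingleton S›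
          haveI : IsFreeGroup T := inferInstance
          obtain ⟨f, hf⟩ := freeGroup_surj_int T
          let θe : T ≃* S := MulEquiv.ofBijective θ ⟨hθinj, hθsurj⟩
          exact ⟨f.comp θe.symm.toMonoidHom, hf.comp θe.symm.surjective⟩
        · obtain ⟨p⟩ := hBT
          exact (not_square_one hG p.1.1 p.2.1 (BT_square hBT2 p)).elim
      · exact (hS (le_bot_iff.mp (hSle.trans (le_of_eq (CC_eq_bot hBT))))).elim
    · obtain ⟨f, hf⟩ := hH (S.map (snd : Coprod G H →* H)) h2 (fg_map hFG _)
      exact ⟨f.comp ((snd : Coprod G H →* H).subgroupMap S),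
        hf.comp ((snd : Coprod G H →* H).subgroupMap_surjective S)⟩
  · obtain ⟨f, hf⟩ := hG (S.map (fst : Coprod G H →* G)) h1 (fg_map hFG _)
    exact ⟨f.comp ((fst : Coprod G H →* G).subgroupMap S),
      hf.comp ((fst : Coprod G H →* G).subgroupMap_surjective S)⟩
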